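/- arXiv:1601.04703 — 4 statements merged into one kernel-verified Lean document; each statement's English description precedes it below -/
import Mathlib

section
/- For real s₁, s₂ > 1, the Euler reflection (quasi-shuffle) formula holds: ζ(s₁)·ζ(s₂) = ζ(s₁,s₂) + ζ(s₂,s₁) + ζ(s₁+s₂), where ζ(s₁,s₂) = ∑_{0<n₂<n₁} n₁^{−s₁} n₂^{−s₂}. -/
/-- Riemann zeta series for real arguments. -/
noncomputable def zetaR (s : ℝ) : ℝ := ∑' n : ℕ, (1 : ℝ) / ((n : ℝ) + 1) ^ s

/-- Double zeta value `ζ(s₁, s₂) = ∑_{0 < n₂ < n₁} n₁^{-s₁} n₂^{-s₂}`. -/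
noncomputable def doubleZeta (s₁ s₂ : ℝ) : ℝ :=
  ∑' p : {p : ℕ × ℕ // 0 < p.2 ∧ p.2 < p.1},
    (1 : ℝ) / (((p : ℕ × ℕ).1 : ℝ) ^ s₁ * ((p : ℕ × ℕ).2 : ℝ) ^ s₂)

lemma summable_shift (s : ℝ) (hs : 1 < s) :
    Summable (fun n : ℕ => (1 : ℝ) / ((n : ℝ) + 1) ^ s) := by
  have h := (Real.summable_one_div_nat_rpow (p := s)).2 hs
  have := (summable_nat_add_iff (f := fun n : ℕ => (1 : ℝ) / (n : ℝ) ^ s) 1).2 h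
  simpa [Nat.cast_add] using this

/-- The equivalence realizing `doubleZeta s₁ s₂` as a sum over shifted indices. -/
def eGT : {q : ℕ × ℕ // q.2 < q.1} ≃ {p : ℕ × ℕ // 0 < p.2 ∧ p.2 < p.1} where
  toFun q := ⟨(q.1.1 + 1, q.1.2 + 1), by obtain ⟨⟨a, b⟩, h⟩ := q; simp at h ⊢; omega⟩
  invFun p := ⟨(p.1.1 - 1, p.1.2 - 1), by obtain ⟨⟨a, b⟩, h⟩ := p; simp at h ⊢; omega⟩
  left_inv q := by obtain ⟨⟨a, b⟩, h⟩ := q; simp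
  right_inv p := by obtain ⟨⟨a, b⟩, h⟩ := p; simp at h ⊢; omega

def eLT : {q : ℕ × ℕ // q.1 < q.2} ≃ {p : ℕ × ℕ // 0 < p.2 ∧ p.2 < p.1} where
  toFun q := ⟨(q.1.2 + 1, q.1.1 + 1), by obtain ⟨⟨a, b⟩, h⟩ := q; simp at h ⊢; omega⟩
  invFun p := ⟨(p.1.2 - 1, p.1.1 - 1), by obtain ⟨⟨a, b⟩, h⟩ := p; simp at h ⊢; omega⟩
  left_inv q := by obtain ⟨⟨a, b⟩, h⟩ := q; simp
  right_inv p := by obtain ⟨⟨a, b⟩, h⟩ := p; simp at h ⊢; omega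

def eDiag : ℕ ≃ ↥{q : ℕ × ℕ | q.1 = q.2} where
  toFun n := ⟨(n, n), rfl⟩
  invFun q := q.1.1
  left_inv n := rfl
  right_inv q := by obtain ⟨⟨a, b⟩, h⟩ := q; simp at h ⊢; omega

theorem stmt_4 (s₁ s₂ : ℝ) (h₁ : 1 < s₁) (h₂ : 1 < s₂) :
    zetaR s₁ * zetaR s₂ = doubleZeta s₁ s₂ + doubleZeta s₂ s₁ + zetaR (s₁ + s₂) := by
  have hf := summable_shift s₁ h₁
  have hg := summable_shift s₂ h₂
  set G : ℕ × ℕ → ℝ := fun q =>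
    (1 : ℝ) / ((q.1 : ℝ) + 1) ^ s₁ * ((1 : ℝ) / ((q.2 : ℝ) + 1) ^ s₂) with hG
  have hpos : ∀ n : ℕ, (0 : ℝ) < ((n : ℝ) + 1) := fun n => by positivity
  have hGsum : Summable G := by
    apply hf.mul_of_nonneg hg
    · intro n; positivity
    · intro n; positivity
  -- product of zetas is the full double sum
  have hprod : zetaR s₁ * zetaR s₂ = ∑' q : ℕ × ℕ, G q :=
    hf.tsum_mul_tsum hg hGsum
  -- split over A = {q.2 < q.1} and its complement
  have hdisj : Disjoint {q : ℕ × ℕ | q.1 < q.2} {q : ℕ × ℕ | q.1 = q.2} := by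
    rw [Set.disjoint_left]
    rintro ⟨a, b⟩ hab hab'
    simp at hab hab'
    omega
  have hAc : ({q : ℕ × ℕ | q.2 < q.1})ᶜ = {q : ℕ × ℕ | q.1 < q.2} ∪ {q : ℕ × ℕ | q.1 = q.2} := by
    ext ⟨a, b⟩
    simp
    omega
  have hsplit : ∑' q : ℕ × ℕ, G q
      = ∑' q : {q : ℕ × ℕ | q.2 < q.1}, G q +
        (∑' q : {q : ℕ × ℕ | q.1 < q.2}, G q + ∑' q : {q : ℕ × ℕ | q.1 = q.2}, G q) := by
    rw [← hGsum.tsum_subtype_add_tsum_subtype_compl {q : ℕ × ℕ | q.2 < q.1}, hAc,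
      Summable.tsum_union_disjoint hdisj (hGsum.subtype _) (hGsum.subtype _)]
  -- identify the three pieces
  have hApiece : ∑' q : {q : ℕ × ℕ | q.2 < q.1}, G q = doubleZeta s₁ s₂ := by
    rw [doubleZeta, ← Equiv.tsum_eq eGT]
    apply tsum_congr
    rintro ⟨⟨a, b⟩, h⟩
    simp [eGT, hG]
    ring
  have hBpiece : ∑' q : {q : ℕ × ℕ | q.1 < q.2}, G q = doubleZeta s₂ s₁ := by
    rw [doubleZeta, ← Equiv.tsum_eq eLT]
    apply tsum_congr
    rintro ⟨⟨a, b⟩, h⟩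
    simp [eLT, hG]
  have hCpiece : ∑' q : {q : ℕ × ℕ | q.1 = q.2}, G q = zetaR (s₁ + s₂) := by
    rw [zetaR, ← Equiv.tsum_eq eDiag]
    apply tsum_congr
    intro n
    simp only [eDiag, hG, Equiv.coe_fn_mk]
    rw [Real.rpow_add (hpos n)]
    ring
  rw [hprod, hsplit, hApiece, hBpiece, hCpiece]
  ring
end

section
/- The limit as y → 0⁺ of (∫_y^∞ (cos t)/t² dt − ∫_{y/2}^y (cos t)/t² dt) exists and equals −π/2. -/
open Filter Real MeasureTheory Set intervalIntegral

noncomputable section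

/-- sinc-like bound -/
lemma abs_sin_div_le_one (t : ℝ) : |Real.sin t / t| ≤ 1 := by
  rcases eq_or_ne t 0 with h | h
  · simp [h]
  · rw [abs_div]
    exact div_le_one_of_le₀ Real.abs_sin_le_abs (abs_nonneg t)

/-- boundedness + measurability gives interval integrability -/
lemma intervalIntegrable_of_bounded {f : ℝ → ℝ} (hm : Measurable f) {C : ℝ}
    (hC : ∀ t, |f t| ≤ C) (a b : ℝ) : IntervalIntegrable f volume a b := by
  rw [intervalIntegrable_iff]
  refine (MeasureTheory.integrableOn_const ?_ (by simp)).mono' hm.aestronglyMeasurable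
    (Filter.Eventually.of_forall fun t => hC t) 
  exact measure_Ioc_lt_top.ne

lemma sin_div_intervalIntegrable (a b : ℝ) :
    IntervalIntegrable (fun t => Real.sin t / t) volume a b :=
  intervalIntegrable_of_bounded (by fun_prop) abs_sin_div_le_one a b

/-- antiderivative of sin t/t + cos t/t^2 -/
lemma hasDerivAt_neg_cos_div {t : ℝ} (ht : t ≠ 0) :
    HasDerivAt (fun x : ℝ => -(Real.cos x / x)) (Real.sin t / t + Real.cos t / t ^ 2) t := by
  have h : HasDerivAt (fun x : ℝ => Real.cos x / x)
      ((-Real.sin t * t - Real.cos t * 1) / t ^ 2) t :=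
    (Real.hasDerivAt_cos t).div (hasDerivAt_id t) ht
  refine h.neg.congr_deriv ?_
  rw [eq_comm, neg_div', div_add_div _ _ ht (pow_ne_zero 2 ht),
    div_eq_div_iff (mul_ne_zero ht (pow_ne_zero 2 ht)) (pow_ne_zero 2 ht)]
  ring

lemma cos_div_sq_continuousOn {s : Set ℝ} (hs : ∀ t ∈ s, t ≠ 0) :
    ContinuousOn (fun t : ℝ => Real.cos t / t ^ 2) s :=
  ContinuousOn.div (Real.continuous_cos.continuousOn) (by fun_prop)
    (fun t ht => pow_ne_zero 2 (hs t ht))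

lemma key_identity {a b : ℝ} (ha : 0 < a) (hb : 0 < b) :
    ∫ t in a..b, (Real.sin t / t + Real.cos t / t ^ 2)
      = Real.cos a / a - Real.cos b / b := by
  have hsub : Set.uIcc a b ⊆ Set.Ioi 0 := fun x hx =>
    lt_of_lt_of_le (lt_min ha hb) hx.1
  have h := intervalIntegral.integral_eq_sub_of_hasDerivAt
    (f := fun x : ℝ => -(Real.cos x / x))
    (f' := fun t => Real.sin t / t + Real.cos t / t ^ 2)
    (fun t ht => hasDerivAt_neg_cos_div (ne_of_gt (hsub ht)))
    ((sin_div_intervalIntegrable a b).add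
      ((cos_div_sq_continuousOn (fun t ht => ne_of_gt (hsub ht))).intervalIntegrable))
  rw [h]; ring

lemma integrableOn_cos_div_sq {y : ℝ} (hy : 0 < y) :
    IntegrableOn (fun t : ℝ => Real.cos t / t ^ 2) (Set.Ioi y) := by
  refine (integrableOn_Ioi_rpow_of_lt (by norm_num : (-2:ℝ) < -1) hy).mono'
    ((Real.measurable_cos.div (measurable_id.pow_const 2)).aestronglyMeasurable)
    ?_
  filter_upwards [ae_restrict_mem measurableSet_Ioi] with t ht
  have ht0 : (0:ℝ) < t := lt_trans hy ht
  rw [Real.rpow_neg ht0.le, Real.norm_eq_abs, abs_div, abs_of_nonneg (sq_nonneg t),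
    show ((2:ℝ)) = ((2:ℕ):ℝ) by norm_num, Real.rpow_natCast, inv_eq_one_div]
  gcongr
  exact Real.abs_cos_le_one t

def S (X : ℝ) : ℝ := ∫ t in (0:ℝ)..X, Real.sin t / t

def D : ℝ := S 1 + (Real.cos 1 / 1 - ∫ t in Set.Ioi (1:ℝ), Real.cos t / t ^ 2)

lemma tendsto_cos_div_atTop : Tendsto (fun X : ℝ => Real.cos X / X) atTop (nhds 0) := by
  refine squeeze_zero_norm' ?_ (tendsto_inv_atTop_zero (𝕜 := ℝ))
  filter_upwards [eventually_gt_atTop (0:ℝ)] with X hX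
  rw [Real.norm_eq_abs, abs_div, abs_of_pos hX, inv_eq_one_div]
  gcongr
  exact Real.abs_cos_le_one X

lemma tendsto_tail_sin_div {y : ℝ} (hy : 0 < y) :
    Tendsto (fun X => ∫ t in y..X, Real.sin t / t) atTop
      (nhds (Real.cos y / y - ∫ t in Set.Ioi y, Real.cos t / t ^ 2)) := by
  have heq : ∀ᶠ X in atTop, (Real.cos y / y - Real.cos X / X)
      - (∫ t in y..X, Real.cos t / t ^ 2) = ∫ t in y..X, Real.sin t / t := by
    filter_upwards [eventually_gt_atTop (0:ℝ)] with X hX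
    have h1 := key_identity hy hX
    rw [intervalIntegral.integral_add (sin_div_intervalIntegrable y X)
      ((cos_div_sq_continuousOn (fun t ht =>
        ne_of_gt (lt_of_lt_of_le (lt_min hy hX) ht.1))).intervalIntegrable)] at h1
    linarith
  apply Tendsto.congr' heq
  have h2 := intervalIntegral_tendsto_integral_Ioi y (integrableOn_cos_div_sq hy)
    tendsto_id
  have h3 : Tendsto (fun X : ℝ => Real.cos y / y - Real.cos X / X) atTop
      (nhds (Real.cos y / y - 0)) := tendsto_const_nhds.sub tendsto_cos_div_atTop
  simpa using h3.sub h2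

lemma tendsto_S_atTop : Tendsto S atTop (nhds D) := by
  have heq : ∀ X : ℝ, S 1 + (∫ t in (1:ℝ)..X, Real.sin t / t) = S X := fun X =>
    intervalIntegral.integral_add_adjacent_intervals
      (sin_div_intervalIntegrable 0 1) (sin_div_intervalIntegrable 1 X)
  apply Tendsto.congr heq
  exact tendsto_const_nhds.add (tendsto_tail_sin_div one_pos)

lemma ioi_formula {y : ℝ} (hy : 0 < y) :
    (∫ t in Set.Ioi y, Real.cos t / t ^ 2) = Real.cos y / y - D + S y := by
  have h1 : Tendsto (fun X => ∫ t in y..X, Real.sin t / t) atTop (nhds (D - S y)) := by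
    have heq : ∀ X : ℝ, S X - S y = ∫ t in y..X, Real.sin t / t := fun X => by
      have := intervalIntegral.integral_add_adjacent_intervals
        (sin_div_intervalIntegrable 0 y) (sin_div_intervalIntegrable y X)
      rw [show S X = _ from this.symm]; unfold S; ring
    exact Tendsto.congr heq (tendsto_S_atTop.sub tendsto_const_nhds)
  have := tendsto_nhds_unique (tendsto_tail_sin_div hy) h1
  linarith

lemma abs_sin_nat_mul_le (n : ℕ) (x : ℝ) :
    |Real.sin (n * x)| ≤ n * |Real.sin x| := by
  induction n with
  | zero => simp
  | succ n ih =>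
    have : Real.sin ((n + 1 : ℕ) * x) = Real.sin (n * x) * Real.cos x
        + Real.cos (n * x) * Real.sin x := by
      rw [← Real.sin_add]; push_cast; ring_nf
    rw [this]
    calc |Real.sin (n * x) * Real.cos x + Real.cos (n * x) * Real.sin x|
        ≤ |Real.sin (n * x) * Real.cos x| + |Real.cos (n * x) * Real.sin x| := abs_add_le _ _
      _ ≤ |Real.sin (n * x)| * 1 + 1 * |Real.sin x| := by
          rw [abs_mul, abs_mul]
          gcongr
          · exact Real.abs_cos_le_one x
          · exact Real.abs_cos_le_one _
      _ ≤ (n : ℝ) * |Real.sin x| + 1 * |Real.sin x| := by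
          rw [mul_one]; gcongr
      _ = ((n + 1 : ℕ) : ℝ) * |Real.sin x| := by push_cast; ring

lemma abs_sin_mul_div_sin_le (n : ℕ) (t : ℝ) :
    |Real.sin (n * t) / Real.sin t| ≤ n := by
  rcases eq_or_ne (Real.sin t) 0 with h | h
  · simp [h]
  · rw [abs_div, div_le_iff₀ (abs_pos.2 h)]
    exact abs_sin_nat_mul_le n t

lemma dk_integrable (n : ℕ) (a b : ℝ) :
    IntervalIntegrable (fun t => Real.sin ((2 * n + 1) * t) / Real.sin t) volume a b := by
  have := intervalIntegrable_of_bounded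
    (f := fun t => Real.sin (((2 * n + 1 : ℕ) : ℝ) * t) / Real.sin t)
    (by fun_prop) (fun t => abs_sin_mul_div_sin_le (2 * n + 1) t) a b
  simpa [Nat.cast_add, Nat.cast_mul] using this

lemma dirichlet_kernel (n : ℕ) :
    ∫ t in (0:ℝ)..(π/2), Real.sin ((2 * n + 1) * t) / Real.sin t = π / 2 := by
  induction n with
  | zero =>
    have : ∫ t in (0:ℝ)..(π/2), Real.sin ((2 * (0:ℕ) + 1) * t) / Real.sin t
        = ∫ t in (0:ℝ)..(π/2), (1:ℝ) := by
      apply intervalIntegral.integral_congr_ae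
      apply Filter.Eventually.of_forall
      intro t ht
      rw [Set.uIoc_of_le (by positivity : (0:ℝ) ≤ π/2)] at ht
      have hst : Real.sin t ≠ 0 :=
        ne_of_gt (Real.sin_pos_of_pos_of_lt_pi ht.1
          (lt_of_le_of_lt ht.2 (by linarith [Real.pi_pos])))
      push_cast
      rw [show (2 * (0:ℝ) + 1) * t = t by ring, div_self hst]
    rw [this]; simp
  | succ n ih =>
    have hdiff : ∫ t in (0:ℝ)..(π/2),
        (Real.sin ((2 * ((n:ℝ) + 1) + 1) * t) / Real.sin t
          - Real.sin ((2 * (n:ℝ) + 1) * t) / Real.sin t)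
        = ∫ t in (0:ℝ)..(π/2), 2 * Real.cos ((2 * (n:ℝ) + 2) * t) := by
      apply intervalIntegral.integral_congr_ae
      apply Filter.Eventually.of_forall
      intro t ht
      rw [Set.uIoc_of_le (by positivity : (0:ℝ) ≤ π/2)] at ht
      have hst : Real.sin t ≠ 0 :=
        ne_of_gt (Real.sin_pos_of_pos_of_lt_pi ht.1
          (lt_of_le_of_lt ht.2 (by linarith [Real.pi_pos])))
      rw [div_sub_div_same, Real.sin_sub_sin]
      rw [show ((2 * ((n:ℝ) + 1) + 1) * t - (2 * (n:ℝ) + 1) * t) / 2 = t by ring,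
        show ((2 * ((n:ℝ) + 1) + 1) * t + (2 * (n:ℝ) + 1) * t) / 2 = (2 * (n:ℝ) + 2) * t by ring]
      field_simp
    have hcos : ∫ t in (0:ℝ)..(π/2), 2 * Real.cos ((2 * (n:ℝ) + 2) * t) = 0 := by
      rw [intervalIntegral.integral_const_mul]
      have hc : (2 * (n:ℝ) + 2) ≠ 0 := by positivity
      rw [intervalIntegral.integral_comp_mul_left (fun u => Real.cos u) hc,
        integral_cos, mul_zero, Real.sin_zero,
        show (2 * (n:ℝ) + 2) * (π/2) = ((n+1 : ℕ) : ℝ) * π by push_cast; ring,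
        Real.sin_nat_mul_pi]
      simp
    have hsplit : ∫ t in (0:ℝ)..(π/2),
        Real.sin ((2 * ((n:ℝ) + 1) + 1) * t) / Real.sin t
        = (∫ t in (0:ℝ)..(π/2), Real.sin ((2 * (n:ℝ) + 1) * t) / Real.sin t)
          + ∫ t in (0:ℝ)..(π/2),
            (Real.sin ((2 * ((n:ℝ) + 1) + 1) * t) / Real.sin t
              - Real.sin ((2 * (n:ℝ) + 1) * t) / Real.sin t) := by
      rw [intervalIntegral.integral_sub (by simpa using dk_integrable (n+1) 0 (π/2))
        (dk_integrable n 0 (π/2))]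
      ring
    push_cast
    rw [hsplit, hdiff, hcos]
    push_cast at ih
    rw [ih]; ring

def g (t : ℝ) : ℝ := 1 / Real.sin t - 1 / t

lemma g_nonneg {t : ℝ} (ht : t ∈ Set.Ioc 0 (π/2)) : 0 ≤ g t := by
  have hs : 0 < Real.sin t := Real.sin_pos_of_pos_of_lt_pi ht.1
    (lt_of_le_of_lt ht.2 (by linarith [Real.pi_pos]))
  have hst : Real.sin t ≤ t := Real.sin_le ht.1.le
  unfold g
  rw [sub_nonneg]
  exact one_div_le_one_div_of_le hs hst

lemma g_le {t : ℝ} (ht : t ∈ Set.Ioc 0 (π/2)) : g t ≤ 4/3 := by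
  have hs : 0 < Real.sin t := Real.sin_pos_of_pos_of_lt_pi ht.1
    (lt_of_le_of_lt ht.2 (by linarith [Real.pi_pos]))
  rcases le_or_gt t 1 with h1 | h1
  · have hcube : t - t ^ 3 / 4 < Real.sin t :=
      lt_of_le_of_lt (by nlinarith [pow_pos ht.1 3]) (Real.sin_gt_sub_cube ht.1)
    have ht2 : t ^ 2 ≤ 1 := by nlinarith [ht.1]
    have ht3 : t ^ 3 ≤ t := by nlinarith [ht.1]
    have hs2 : 3 / 4 * t ≤ Real.sin t := by nlinarith
    have hgt : g t = (t - Real.sin t) / (t * Real.sin t) := by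
      unfold g
      rw [div_sub_div 1 1 hs.ne' ht.1.ne']
      rw [mul_comm (Real.sin t) t]
      ring_nf
    rw [hgt]
    have hd : (0:ℝ) < 3 / 4 * t ^ 2 := by nlinarith [ht.1]
    calc (t - Real.sin t) / (t * Real.sin t) ≤ (t ^ 3 / 4) / (3 / 4 * t ^ 2) := by
          apply div_le_div₀ (by nlinarith [ht.1]) (by linarith) hd (by nlinarith [ht.1])
      _ = t / 3 := by field_simp [ht.1.ne']
      _ ≤ 4/3 := by linarith
  · have hs1 : (3:ℝ)/4 ≤ Real.sin t := by
      have h14 : (1:ℝ) - 1 ^ 3 / 4 < Real.sin 1 := lt_of_le_of_lt (by norm_num) (Real.sin_gt_sub_cube one_pos)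
      rcases le_or_gt t (π/2) with h2 | h2
      · calc (3:ℝ)/4 ≤ Real.sin 1 := by norm_num at h14 ⊢; linarith
          _ ≤ Real.sin t := by
            apply Real.sin_le_sin_of_le_of_le_pi_div_two (by linarith [Real.pi_pos]) h2 h1.le
      · exact absurd h2 (not_lt.2 ht.2)
    have : g t ≤ 1 / Real.sin t := by
      unfold g
      have : 0 < 1 / t := by positivity
      linarith
    calc g t ≤ 1 / Real.sin t := this
      _ ≤ 1 / (3/4) := one_div_le_one_div_of_le (by norm_num) hs1
      _ = 4/3 := by norm_num

lemma g_measurable : Measurable g := by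
  unfold g; fun_prop

def gI : ℝ → ℝ := Set.indicator (Set.Ioc 0 (π/2)) g

lemma gI_abs_le (t : ℝ) : |gI t| ≤ 4/3 := by
  unfold gI
  rcases Classical.em (t ∈ Set.Ioc 0 (π/2)) with h | h
  · rw [Set.indicator_of_mem h, abs_of_nonneg (g_nonneg h)]
    exact g_le h
  · rw [Set.indicator_of_notMem h]; norm_num

lemma gI_measurable : Measurable gI :=
  g_measurable.indicator measurableSet_Ioc

lemma gI_integrable : MeasureTheory.Integrable (fun t => ((gI t : ℝ) : ℂ)) := by
  have : MeasureTheory.Integrable gI volume := by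
    have h := intervalIntegrable_of_bounded gI_measurable gI_abs_le 0 (π/2)
    rw [intervalIntegrable_iff] at h
    refine (MeasureTheory.integrable_indicator_iff measurableSet_Ioc).2 ?_
    · rw [Set.uIoc_of_le (by positivity : (0:ℝ) ≤ π/2)] at h
      exact h.congr_fun (fun t ht => Set.indicator_of_mem ht g) measurableSet_Ioc
  exact this.ofReal

lemma RL_aux : Tendsto (fun n : ℕ => ∫ t in (0:ℝ)..(π/2),
    Real.sin ((2 * n + 1) * t) * g t) atTop (nhds 0) := by
  have hpi : (0:ℝ) < π := Real.pi_pos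
  set G : ℝ → ℂ := fun t => ((gI t : ℝ) : ℂ) with hGdef
  have hRL := Real.tendsto_integral_exp_smul_cocompact G
  have hw : Tendsto (fun n : ℕ => -((2 * (n:ℝ) + 1) / (2 * π))) atTop (cocompact ℝ) := by
    refine Tendsto.mono_right ?_ _root_.atBot_le_cocompact
    apply Filter.tendsto_neg_atTop_atBot.comp
    apply Tendsto.atTop_div_const (by positivity)
    apply tendsto_atTop_add_const_right
    exact (tendsto_natCast_atTop_atTop (R := ℝ)).const_mul_atTop two_pos
  have h := hRL.comp hw
  have him := (Complex.continuous_im.tendsto 0).comp h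
  simp only [Complex.zero_im, Function.comp_def] at him
  refine Tendsto.congr (fun n => ?_) him
  have harg : ∀ v : ℝ, Real.fourierChar (-(v * -((2 * (n:ℝ) + 1) / (2 * π)))) • G v
      = Complex.exp (((2 * (n:ℝ) + 1) * v : ℝ) * Complex.I) * ((gI v : ℝ) : ℂ) := by
    intro v
    rw [Circle.smul_def, Real.fourierChar_apply]
    congr 2
    have hπc : (π:ℂ) ≠ 0 := Complex.ofReal_ne_zero.2 hpi.ne'
    push_cast
    field_simp
  have hint : MeasureTheory.Integrable
      (fun v : ℝ => Complex.exp (((2 * (n:ℝ) + 1) * v : ℝ) * Complex.I) * ((gI v : ℝ) : ℂ)) := by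
    apply MeasureTheory.Integrable.bdd_mul (c := 1) gI_integrable
    · apply Continuous.aestronglyMeasurable
      exact Complex.continuous_exp.comp (by fun_prop)
    · exact Filter.Eventually.of_forall (fun v => le_of_eq (Complex.norm_exp_ofReal_mul_I _))
  simp only [harg]
  have hswap := _root_.integral_im (𝕜 := ℂ) hint
  simp only [RCLike.im_to_complex] at hswap
  rw [← hswap]
  have him2 : ∀ v : ℝ, (Complex.exp (((2 * (n:ℝ) + 1) * v : ℝ) * Complex.I)
      * ((gI v : ℝ) : ℂ)).im = Real.sin ((2 * (n:ℝ) + 1) * v) * gI v := by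
    intro v
    rw [Complex.mul_im, Complex.exp_ofReal_mul_I_re, Complex.exp_ofReal_mul_I_im]
    simp
  simp only [him2]
  have hind : ∀ v : ℝ, Real.sin ((2 * (n:ℝ) + 1) * v) * gI v
      = Set.indicator (Set.Ioc 0 (π/2)) (fun v => Real.sin ((2 * (n:ℝ) + 1) * v) * g v) v := by
    intro v
    unfold gI
    exact (Set.indicator_mul_right (Set.Ioc 0 (π/2)) (fun v => Real.sin ((2 * (n:ℝ) + 1) * v)) g).symm
  simp only [hind]
  rw [MeasureTheory.integral_indicator measurableSet_Ioc,
    ← intervalIntegral.integral_of_le (by positivity : (0:ℝ) ≤ π/2)]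

lemma abs_sin_mul_div_le (a t : ℝ) (ha : 0 ≤ a) : |Real.sin (a * t) / t| ≤ a := by
  rcases eq_or_ne t 0 with h | h
  · simp [h, ha]
  · rw [abs_div, div_le_iff₀ (abs_pos.2 h)]
    calc |Real.sin (a * t)| ≤ |a * t| := Real.abs_sin_le_abs
      _ = a * |t| := by rw [abs_mul, abs_of_nonneg ha]

lemma sin_mul_div_intervalIntegrable (n : ℕ) (b c : ℝ) :
    IntervalIntegrable (fun t => Real.sin ((2 * n + 1) * t) / t) volume b c :=
  intervalIntegrable_of_bounded (by fun_prop)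
    (fun t => abs_sin_mul_div_le (2 * n + 1) t (by positivity)) b c

lemma S_seq (n : ℕ) : S ((2 * n + 1) * (π / 2))
    = π / 2 - ∫ t in (0:ℝ)..(π/2), Real.sin ((2 * n + 1) * t) * g t := by
  have hpi : (0:ℝ) < π := Real.pi_pos
  have hc : (2 * (n:ℝ) + 1) ≠ 0 := by positivity
  -- substitution
  have hsub : S ((2 * (n:ℝ) + 1) * (π / 2))
      = ∫ t in (0:ℝ)..(π/2), Real.sin ((2 * n + 1) * t) / t := by
    have h := intervalIntegral.integral_comp_mul_left
      (a := (0:ℝ)) (b := π/2) (fun u => Real.sin u / u) hc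
    have h2 : (∫ t in (0:ℝ)..((2*(n:ℝ)+1)*(π/2)), Real.sin t / t)
        = (2*(n:ℝ)+1) * ∫ x in (0:ℝ)..(π/2),
            Real.sin ((2*(n:ℝ)+1)*x) / ((2*(n:ℝ)+1)*x) := by
      rw [show (∫ t in (0:ℝ)..((2*(n:ℝ)+1)*(π/2)), Real.sin t / t)
          = ∫ x in ((2*(n:ℝ)+1)*0)..((2*(n:ℝ)+1)*(π/2)), Real.sin x / x by rw [mul_zero],
        h, smul_eq_mul, ← mul_assoc, mul_inv_cancel₀ hc, one_mul]
    unfold S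
    rw [h2, ← intervalIntegral.integral_const_mul]
    apply intervalIntegral.integral_congr
    intro t _
    show (2*(n:ℝ)+1) * (Real.sin ((2*(n:ℝ)+1)*t) / ((2*(n:ℝ)+1)*t)) = _
    rcases eq_or_ne t 0 with h0 | h0
    · simp [h0]
    · rw [← mul_div_assoc, mul_div_mul_left _ _ hc]
  rw [hsub]
  -- split via dirichlet kernel
  have hker := dirichlet_kernel n
  have hint1 := dk_integrable n 0 (π/2)
  have hint2 := sin_mul_div_intervalIntegrable n 0 (π/2)
  have hfun : (fun t => Real.sin ((2 * n + 1) * t) * g t)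
      = fun t => Real.sin ((2 * n + 1) * t) / Real.sin t
        - Real.sin ((2 * n + 1) * t) / t := by
    funext t; unfold g; ring
  rw [show (∫ t in (0:ℝ)..(π/2), Real.sin ((2 * n + 1) * t) * g t)
      = (∫ t in (0:ℝ)..(π/2), Real.sin ((2 * n + 1) * t) / Real.sin t)
        - ∫ t in (0:ℝ)..(π/2), Real.sin ((2 * n + 1) * t) / t by
    rw [hfun, intervalIntegral.integral_sub hint1 hint2]]
  rw [hker]
  ring

lemma D_eq : D = π / 2 := by
  have hpi : (0:ℝ) < π := Real.pi_pos
  have hx : Tendsto (fun n : ℕ => (2 * (n:ℝ) + 1) * (π / 2)) atTop atTop := by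
    apply Tendsto.atTop_mul_const (by positivity)
    apply tendsto_atTop_add_const_right
    exact (tendsto_natCast_atTop_atTop (R := ℝ)).const_mul_atTop two_pos
  have h1 : Tendsto (fun n : ℕ => S ((2 * (n:ℝ) + 1) * (π / 2))) atTop (nhds D) :=
    tendsto_S_atTop.comp hx
  have h2 : Tendsto (fun n : ℕ => S ((2 * (n:ℝ) + 1) * (π / 2))) atTop (nhds (π / 2)) := by
    have := tendsto_const_nhds (x := π/2) (f := atTop (α := ℕ)) |>.sub RL_aux
    simp only [sub_zero] at this
    exact Tendsto.congr (fun n => (S_seq n).symm) this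
  exact tendsto_nhds_unique h1 h2

lemma tendsto_S_zero : Tendsto S (nhdsWithin 0 (Set.Ioi 0)) (nhds 0) := by
  refine squeeze_zero_norm (fun y => ?_)
    ((continuous_abs.tendsto' 0 0 abs_zero).mono_left nhdsWithin_le_nhds)
  · have := intervalIntegral.norm_integral_le_of_norm_le_const
      (C := 1) (f := fun t => Real.sin t / t) (a := 0) (b := y)
      (fun x _ => by rw [Real.norm_eq_abs]; exact abs_sin_div_le_one x)
    unfold S
    simpa using this

lemma tendsto_half : Tendsto (fun y : ℝ => y / 2) (nhdsWithin 0 (Set.Ioi 0))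
    (nhdsWithin 0 (Set.Ioi 0)) := by
  apply tendsto_nhdsWithin_of_tendsto_nhds_of_eventually_within
  · have : Tendsto (fun y : ℝ => y / 2) (nhds 0) (nhds 0) := by
      simpa using (continuous_id.div_const 2).tendsto' 0 0 (by norm_num)
    exact this.mono_left nhdsWithin_le_nhds
  · filter_upwards [self_mem_nhdsWithin] with y hy
    exact div_pos (show (0:ℝ) < y from hy) two_pos

lemma tendsto_cos_term : Tendsto (fun y : ℝ => 2 * (Real.cos y - Real.cos (y/2)) / y)
    (nhdsWithin 0 (Set.Ioi 0)) (nhds 0) := by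
  have hg : Tendsto (fun y : ℝ => 3/4 * y) (nhdsWithin 0 (Set.Ioi 0)) (nhds 0) := by
    have : Tendsto (fun y : ℝ => 3/4 * y) (nhds 0) (nhds 0) := by
      simpa using (continuous_id.const_mul (3/4:ℝ)).tendsto' (0:ℝ) 0 (by norm_num)
    exact this.mono_left nhdsWithin_le_nhds
  refine squeeze_zero_norm' ?_ hg
  · filter_upwards [self_mem_nhdsWithin] with y hy
    have hy0 : 0 < y := hy
    have habs : |Real.cos y - Real.cos (y/2)| ≤ 3/8 * y^2 := by
      rw [Real.cos_sub_cos]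
      have e1 : |Real.sin ((y + y/2)/2)| ≤ (3/4)*y := by
        refine le_trans Real.abs_sin_le_abs ?_
        rw [abs_of_nonneg (by linarith)]
        ring_nf
        linarith
      have e2 : |Real.sin ((y - y/2)/2)| ≤ (1/4)*y := by
        refine le_trans Real.abs_sin_le_abs ?_
        rw [abs_of_nonneg (by linarith)]
        ring_nf
        linarith
      calc |-2 * Real.sin ((y + y/2)/2) * Real.sin ((y - y/2)/2)|
          = 2 * (|Real.sin ((y + y/2)/2)| * |Real.sin ((y - y/2)/2)|) := by
            rw [abs_mul, abs_mul]; simp [abs_of_nonneg]; ring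
        _ ≤ 2 * ((3/4*y) * (1/4*y)) := by gcongr
        _ = 3/8 * y^2 := by ring
    rw [Real.norm_eq_abs, abs_div, abs_of_pos hy0, abs_mul, abs_two]
    rw [div_le_iff₀ hy0]
    nlinarith [abs_nonneg (Real.cos y - Real.cos (y/2))]

theorem stmt_16 :
    Tendsto (fun y : ℝ =>
      (∫ t in Set.Ioi y, Real.cos t / t ^ 2)
        - ∫ t in (y / 2)..y, Real.cos t / t ^ 2)
      (nhdsWithin 0 (Set.Ioi 0)) (nhds (-(Real.pi / 2))) := by
  have heq : ∀ᶠ y in nhdsWithin (0:ℝ) (Set.Ioi 0),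
      2 * (Real.cos y - Real.cos (y/2)) / y + (2 * S y - S (y/2)) - D
        = (∫ t in Set.Ioi y, Real.cos t / t ^ 2)
          - ∫ t in (y / 2)..y, Real.cos t / t ^ 2 := by
    filter_upwards [self_mem_nhdsWithin] with y hy
    have hy0 : 0 < y := hy
    have hy2 : (0:ℝ) < y/2 := by linarith
    have hA := ioi_formula hy0
    have hB := key_identity hy2 hy0
    rw [intervalIntegral.integral_add (sin_div_intervalIntegrable _ _)
      ((cos_div_sq_continuousOn (fun t ht =>
        ne_of_gt (lt_of_lt_of_le (lt_min hy2 hy0) ht.1))).intervalIntegrable)] at hB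
    have hS : (∫ t in (y/2)..y, Real.sin t / t) = S y - S (y/2) := by
      have h3 := intervalIntegral.integral_add_adjacent_intervals
        (sin_div_intervalIntegrable 0 (y/2)) (sin_div_intervalIntegrable (y/2) y)
      have : S (y/2) + (∫ t in (y/2)..y, Real.sin t / t) = S y := h3
      linarith
    have hhalf : Real.cos (y/2) / (y/2) = 2 * Real.cos (y/2) / y := by
      rw [div_div_eq_mul_div]
      ring
    have hBval : (∫ t in (y/2)..y, Real.cos t / t ^ 2)
        = 2 * Real.cos (y/2) / y - Real.cos y / y - S y + S (y/2) := by
      rw [hS, hhalf] at hB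
      linarith
    rw [hA, hBval]
    ring
  refine Tendsto.congr' heq ?_
  have hlim : Tendsto (fun y : ℝ =>
      2 * (Real.cos y - Real.cos (y/2)) / y + (2 * S y - S (y/2)) - D)
      (nhdsWithin 0 (Set.Ioi 0)) (nhds (0 + (2 * 0 - 0) - D)) := by
    exact (tendsto_cos_term.add
      ((tendsto_S_zero.const_mul 2).sub (tendsto_S_zero.comp tendsto_half))).sub
      tendsto_const_nhds
  convert hlim using 2
  rw [D_eq]
  ring
end
end

section
/- For fixed real r > 0, the limit as y → 0⁺ of (∫_y^∞ t^{−1} e^{−t} dt − ∫_{r y²}^y t^{−1} e^{−t} dt) exists and equals −γ + ln r. -/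
open Filter MeasureTheory Set Real

noncomputable def E17h (t : ℝ) : ℝ := (Real.exp (-t) - 1) / t

lemma E17h_norm_le {t : ℝ} (ht : 0 < t) : ‖E17h t‖ ≤ 1 := by
  have h1 : Real.exp (-t) ≤ 1 := Real.exp_le_one_iff.mpr (by linarith)
  have h2 : 1 - t ≤ Real.exp (-t) := by
    have := Real.add_one_le_exp (-t); linarith
  rw [E17h, Real.norm_eq_abs, abs_div, abs_of_pos ht, div_le_one ht, abs_le]
  constructor <;> linarith

lemma E17h_meas : Measurable E17h :=
  ((Real.measurable_exp.comp measurable_neg).sub measurable_const).div measurable_id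

lemma E17h_int : IntegrableOn E17h (Ioc 0 1) := by
  refine Measure.integrableOn_of_bounded (M := 1) (by simp) E17h_meas.aestronglyMeasurable ?_
  filter_upwards [ae_restrict_mem measurableSet_Ioc] with t ht
  exact E17h_norm_le ht.1

lemma E17cov : AECover (volume.restrict (Ioc (0:ℝ) 1)) (nhdsWithin 0 (Ioi 0))
    (fun ε => Ioc ε 1) := by
  constructor
  · filter_upwards [ae_restrict_mem measurableSet_Ioc] with x hx
    filter_upwards [Ioo_mem_nhdsGT_of_mem ⟨le_refl 0, hx.1⟩] with ε hε
    exact ⟨hε.2, hx.2⟩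
  · intro ε; exact measurableSet_Ioc

lemma E17tendstoIoc {g : ℝ → ℝ} (hg : IntegrableOn g (Ioc 0 1)) :
    Tendsto (fun ε => ∫ t in Ioc ε 1, g t) (nhdsWithin 0 (Ioi 0))
      (nhds (∫ t in Ioc 0 1, g t)) := by
  have := E17cov.integral_tendsto_of_countably_generated hg
  refine this.congr' ?_
  filter_upwards [Ioo_mem_nhdsGT_of_mem (⟨le_refl 0, zero_lt_one⟩ : (0:ℝ) ∈ Ico (0:ℝ) 1)]
    with ε hε
  rw [Measure.restrict_restrict measurableSet_Ioc, Ioc_inter_Ioc,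
    max_eq_left hε.1.le, min_self]

lemma E17explog_int : IntegrableOn (fun t => Real.exp (-t) * Real.log t) (Ioc (0:ℝ) 1) := by
  have hint : IntegrableOn (fun t : ℝ => 2 * t ^ (-(1:ℝ)/2)) (Ioc 0 1) := by
    have := (intervalIntegral.intervalIntegrable_rpow' (a := 0) (b := 1)
      (r := -(1:ℝ)/2) (by norm_num))
    rw [intervalIntegrable_iff_integrableOn_Ioc_of_le zero_le_one] at this
    exact this.const_mul 2
  refine Integrable.mono' hint
    (((Real.measurable_exp.comp measurable_neg).mul Real.measurable_log).aestronglyMeasurable) ?_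
  filter_upwards [ae_restrict_mem measurableSet_Ioc] with t ht
  have ht0 := ht.1
  have hle : -Real.log t ≤ 2 * t ^ (-(1:ℝ)/2) := by
    have hs : t ^ (-(1:ℝ)/2) = (t ^ ((1:ℝ)/2))⁻¹ := by
      rw [← Real.rpow_neg ht0.le]; norm_num
    have hsp : 0 < t ^ ((1:ℝ)/2) := Real.rpow_pos_of_pos ht0 _
    have hlog : Real.log t = 2 * Real.log (t ^ ((1:ℝ)/2)) := by
      rw [Real.log_rpow ht0]; ring
    have hb : 1 - (t ^ ((1:ℝ)/2))⁻¹ ≤ Real.log (t ^ ((1:ℝ)/2)) := by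
      have := Real.add_one_le_exp (-Real.log (t ^ ((1:ℝ)/2)))
      rw [Real.exp_neg, Real.exp_log hsp] at this
      linarith
    rw [hlog, hs]
    nlinarith [hsp, inv_pos.mpr hsp]
  have hexp : Real.exp (-t) ≤ 1 := Real.exp_le_one_iff.mpr (by linarith)
  have hlneg : Real.log t ≤ 0 := Real.log_nonpos ht0.le ht.2
  rw [Real.norm_eq_abs, abs_mul, abs_of_pos (Real.exp_pos _), abs_of_nonpos hlneg]
  calc Real.exp (-t) * -Real.log t ≤ 1 * -Real.log t := by
        apply mul_le_mul_of_nonneg_right hexp (by linarith)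
    _ = -Real.log t := one_mul _
    _ ≤ 2 * t ^ (-(1:ℝ)/2) := hle

lemma E17expdiv_int : IntegrableOn (fun t => Real.exp (-t) / t) (Ioi (1:ℝ)) := by
  have hint : IntegrableOn (fun t : ℝ => Real.exp (-t)) (Ioi 1) := by
    simpa using exp_neg_integrableOn_Ioi (a := 1) (b := 1) zero_lt_one
  refine Integrable.mono' hint
    (((Real.measurable_exp.comp measurable_neg).div measurable_id).aestronglyMeasurable) ?_
  filter_upwards [ae_restrict_mem measurableSet_Ioi] with t ht
  have ht1 : (1:ℝ) < t := ht
  rw [Real.norm_eq_abs, abs_div, abs_of_pos (Real.exp_pos _), abs_of_pos (by linarith)]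
  rw [div_le_iff₀ (by linarith)]
  nlinarith [Real.exp_pos (-t)]

lemma E17explog_int_Ioi : IntegrableOn (fun t => Real.exp (-t) * Real.log t) (Ioi (1:ℝ)) := by
  have hint : IntegrableOn (fun t : ℝ => Real.exp (-t) * t) (Ioi 1) := by
    have := Real.GammaIntegral_convergent (s := 2) (by norm_num)
    have h2 : IntegrableOn (fun t : ℝ => Real.exp (-t) * t ^ ((2:ℝ) - 1)) (Ioi 0) := this
    refine (h2.mono_set (Ioi_subset_Ioi zero_le_one)).congr_fun ?_ measurableSet_Ioi
    intro x hx
    simp only [show ((2:ℝ) - 1) = 1 from by norm_num, Real.rpow_one]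

  refine Integrable.mono' hint
    (((Real.measurable_exp.comp measurable_neg).mul Real.measurable_log).aestronglyMeasurable) ?_
  filter_upwards [ae_restrict_mem measurableSet_Ioi] with t ht
  have ht1 : (1:ℝ) < t := ht
  have hlog : Real.log t ≤ t := (Real.log_le_sub_one_of_pos (by linarith)).trans (by linarith)
  have hlog0 : 0 ≤ Real.log t := Real.log_nonneg ht1.le
  rw [Real.norm_eq_abs, abs_mul, abs_of_pos (Real.exp_pos _), abs_of_nonneg hlog0]
  exact mul_le_mul_of_nonneg_left hlog (Real.exp_pos _).le

lemma E17gamma : ∫ t in Ioi (0:ℝ), Real.log t * Real.exp (-t) = -Real.eulerMascheroniConstant := by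
  have h1 : HasDerivAt Complex.GammaIntegral
      (∫ t : ℝ in Ioi 0, (t:ℂ) ^ ((1:ℂ) - 1) * (Real.log t * Real.exp (-t))) 1 :=
    Complex.hasDerivAt_GammaIntegral (by norm_num)
  have h2 : HasDerivAt Complex.GammaIntegral (-(Real.eulerMascheroniConstant:ℂ)) 1 := by
    refine Complex.hasDerivAt_Gamma_one.congr_of_eventuallyEq ?_
    have hopen : IsOpen {s : ℂ | 0 < s.re} := isOpen_lt continuous_const Complex.continuous_re
    filter_upwards [hopen.mem_nhds (by norm_num : (0:ℝ) < (1:ℂ).re)] with s hs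
    exact (Complex.Gamma_eq_integral hs).symm
  have h3 := h1.unique h2
  have h4 : (∫ t : ℝ in Ioi 0, (t:ℂ) ^ ((1:ℂ) - 1) * (Real.log t * Real.exp (-t)))
      = ∫ t in Ioi (0:ℝ), ((Real.log t * Real.exp (-t) : ℝ) : ℂ) := by
    refine setIntegral_congr_fun measurableSet_Ioi fun t _ => ?_
    simp [Complex.ofReal_mul]
  have hcoe : ∫ t in Ioi (0:ℝ), ((Real.log t * Real.exp (-t) : ℝ) : ℂ)
      = (((∫ t in Ioi (0:ℝ), Real.log t * Real.exp (-t)) : ℝ) : ℂ) := integral_ofReal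
  rw [h4, hcoe] at h3
  exact_mod_cast h3

lemma E17expderiv (x : ℝ) : HasDerivAt (fun t => Real.exp (-t)) (-Real.exp (-x)) x := by
  simpa using (hasDerivAt_neg x).exp

lemma E17identB :
    ∫ t in Ioi (1:ℝ), Real.exp (-t) * Real.log t = ∫ t in Ioi (1:ℝ), Real.exp (-t) / t := by
  have hderiv : ∀ x ∈ Ici (1:ℝ), HasDerivAt (fun t => -(Real.exp (-t) * Real.log t))
      (Real.exp (-x) * Real.log x - Real.exp (-x) / x) x := by
    intro x hx
    have hx0 : (0:ℝ) < x := lt_of_lt_of_le zero_lt_one hx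
    have := ((E17expderiv x).mul (Real.hasDerivAt_log hx0.ne')).neg
    refine this.congr_deriv ?_
    field_simp
    ring
  have f'int : IntegrableOn (fun t => Real.exp (-t) * Real.log t - Real.exp (-t) / t)
      (Ioi (1:ℝ)) := E17explog_int_Ioi.sub E17expdiv_int
  have htop : Tendsto (fun t => -(Real.exp (-t) * Real.log t)) atTop (nhds 0) := by
    apply squeeze_zero_norm' _ (tendsto_pow_mul_exp_neg_atTop_nhds_zero 1)
    filter_upwards [Filter.eventually_ge_atTop (1:ℝ)] with t ht
    rw [norm_neg, Real.norm_eq_abs, abs_mul, abs_of_pos (Real.exp_pos _),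
      abs_of_nonneg (Real.log_nonneg ht), pow_one]
    have hlog : Real.log t ≤ t := (Real.log_le_sub_one_of_pos (by linarith)).trans (by linarith)
    nlinarith [Real.exp_pos (-t), Real.log_nonneg ht]
  have key := integral_Ioi_of_hasDerivAt_of_tendsto' hderiv f'int htop
  have key2 : ∫ t in Ioi (1:ℝ), (Real.exp (-t) * Real.log t - Real.exp (-t) / t) = 0 := by
    rw [key]; simp
  rw [integral_sub E17explog_int_Ioi E17expdiv_int] at key2
  linarith [key2]

lemma E17identC :
    ∫ t in Ioc (0:ℝ) 1, Real.exp (-t) * Real.log t = ∫ t in Ioc (0:ℝ) 1, E17h t := by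
  have hAB : ∀ᶠ ε in nhdsWithin (0:ℝ) (Ioi 0),
      (∫ t in Ioc ε 1, Real.exp (-t) * Real.log t) - (∫ t in Ioc ε 1, E17h t)
        = -((1 - Real.exp (-ε)) * Real.log ε) := by
    filter_upwards [Ioo_mem_nhdsGT_of_mem (⟨le_refl 0, zero_lt_one⟩ : (0:ℝ) ∈ Ico (0:ℝ) 1)]
      with ε hε
    have hε0 : 0 < ε := hε.1
    have hε1 : ε ≤ 1 := hε.2.le
    have hderiv : ∀ x ∈ uIcc ε 1, HasDerivAt (fun t => (1 - Real.exp (-t)) * Real.log t)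
        (Real.exp (-x) * Real.log x - E17h x) x := by
      intro x hx
      rw [uIcc_of_le hε1] at hx
      have hx0 : (0:ℝ) < x := lt_of_lt_of_le hε0 hx.1
      have := ((E17expderiv x).const_sub 1).mul (Real.hasDerivAt_log hx0.ne')
      refine this.congr_deriv ?_
      rw [E17h]
      field_simp
      ring
    have hcont : ContinuousOn (fun x => Real.exp (-x) * Real.log x - E17h x) (uIcc ε 1) := by
      rw [uIcc_of_le hε1]
      have : ∀ x ∈ Icc ε 1, x ≠ 0 := fun x hx => (lt_of_lt_of_le hε0 hx.1).ne'
      apply ContinuousOn.sub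
      · exact ((Real.continuous_exp.comp continuous_neg).continuousOn).mul
          (Real.continuousOn_log.mono (fun x hx => this x hx))
      · exact ContinuousOn.div
          (((Real.continuous_exp.comp continuous_neg).sub continuous_const).continuousOn)
          continuousOn_id (fun x hx => this x hx)
    have hftc := intervalIntegral.integral_eq_sub_of_hasDerivAt
      (fun x hx => hderiv x hx) (hcont.intervalIntegrable)
    rw [intervalIntegral.integral_of_le hε1] at hftc
    have hint1 : IntegrableOn (fun t => Real.exp (-t) * Real.log t) (Ioc ε 1) :=
      E17explog_int.mono_set (Ioc_subset_Ioc_left hε0.le)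
    have hint2 : IntegrableOn E17h (Ioc ε 1) := E17h_int.mono_set (Ioc_subset_Ioc_left hε0.le)
    rw [integral_sub hint1 hint2] at hftc
    rw [hftc]
    simp [Real.log_one]
  have h1 := (E17tendstoIoc E17explog_int).sub (E17tendstoIoc E17h_int)
  have h2 : Tendsto (fun ε : ℝ => -((1 - Real.exp (-ε)) * Real.log ε))
      (nhdsWithin (0:ℝ) (Ioi 0)) (nhds 0) := by
    have hg := (tendsto_log_mul_rpow_nhdsGT_zero zero_lt_one).norm
    rw [norm_zero] at hg
    apply squeeze_zero_norm' _ hg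
    filter_upwards [Ioo_mem_nhdsGT_of_mem (⟨le_refl 0, zero_lt_one⟩ : (0:ℝ) ∈ Ico (0:ℝ) 1)]
      with ε hε
    have hε0 : 0 < ε := hε.1
    have hexple : 1 - Real.exp (-ε) ≤ ε := by
      have := Real.add_one_le_exp (-ε); linarith
    have hexpge : 0 ≤ 1 - Real.exp (-ε) := by
      have : Real.exp (-ε) ≤ 1 := Real.exp_le_one_iff.mpr (by linarith)
      linarith
    rw [norm_neg, Real.norm_eq_abs, abs_mul, Real.norm_eq_abs, abs_mul, Real.rpow_one,
      abs_of_nonneg hexpge, abs_of_pos hε0]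
    calc (1 - Real.exp (-ε)) * |Real.log ε| ≤ ε * |Real.log ε| :=
          mul_le_mul_of_nonneg_right hexple (abs_nonneg _)
      _ = |Real.log ε| * ε := mul_comm _ _
  have := tendsto_nhds_unique (h1.congr' hAB) h2
  linarith [this]

lemma E17const :
    (∫ t in Ioc (0:ℝ) 1, E17h t) + (∫ t in Ioi (1:ℝ), Real.exp (-t) / t)
      = -Real.eulerMascheroniConstant := by
  have hcomm : ∫ t in Ioi (0:ℝ), Real.log t * Real.exp (-t)
      = ∫ t in Ioi (0:ℝ), Real.exp (-t) * Real.log t := by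
    refine setIntegral_congr_fun measurableSet_Ioi fun t _ => mul_comm _ _
  have hsplit : ∫ t in Ioi (0:ℝ), Real.exp (-t) * Real.log t
      = (∫ t in Ioc (0:ℝ) 1, Real.exp (-t) * Real.log t)
        + ∫ t in Ioi (1:ℝ), Real.exp (-t) * Real.log t := by
    rw [← setIntegral_union (Ioc_disjoint_Ioi le_rfl) measurableSet_Ioi
      E17explog_int E17explog_int_Ioi, Ioc_union_Ioi_eq_Ioi zero_le_one]
  rw [← E17gamma, hcomm, hsplit, E17identB, E17identC]

lemma E17exptInt {a b : ℝ} (ha : 0 < a) (hb : b ≤ 1) :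
    IntegrableOn (fun t => Real.exp (-t) / t) (Ioc a b) := by
  rcases le_or_gt a b with hab | hab
  · have hcont : ContinuousOn (fun t => Real.exp (-t) / t) (Icc a b) := by
      refine ContinuousOn.div ((Real.continuous_exp.comp continuous_neg).continuousOn)
        continuousOn_id (fun x hx => (lt_of_lt_of_le ha hx.1).ne')
    exact (hcont.integrableOn_Icc).mono_set Ioc_subset_Icc_self
  · rw [Ioc_eq_empty (not_lt.mpr hab.le)]
    simp [IntegrableOn]

lemma E17decomp {a b : ℝ} (ha : 0 < a) (hab : a ≤ b) (hb : b ≤ 1) :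
    ∫ t in Ioc a b, Real.exp (-t) / t
      = (∫ t in Ioc a b, E17h t) + (Real.log b - Real.log a) := by
  have hb0 : 0 < b := lt_of_lt_of_le ha hab
  have hinth : IntegrableOn E17h (Ioc a b) :=
    (E17h_int.mono_set (Ioc_subset_Ioc ha.le hb))
  have hint1 : IntegrableOn (fun t => (1:ℝ)/t) (Ioc a b) := by
    have hcont : ContinuousOn (fun t : ℝ => 1/t) (Icc a b) :=
      ContinuousOn.div continuousOn_const continuousOn_id
        (fun x hx => (lt_of_lt_of_le ha hx.1).ne')
    exact (hcont.integrableOn_Icc).mono_set Ioc_subset_Icc_self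
  have hcongr : ∫ t in Ioc a b, Real.exp (-t) / t
      = ∫ t in Ioc a b, (E17h t + 1/t) := by
    refine setIntegral_congr_fun measurableSet_Ioc fun t ht => ?_
    have ht0 : (0:ℝ) < t := lt_of_lt_of_le ha ht.1.le
    rw [E17h, ← add_div, sub_add_cancel]
  have hlog : ∫ t in Ioc a b, (1:ℝ)/t = Real.log b - Real.log a := by
    rw [← intervalIntegral.integral_of_le hab, integral_one_div
      (notMem_uIcc_of_lt ha hb0 ), Real.log_div hb0.ne' ha.ne']
  rw [hcongr, integral_add hinth hint1, hlog]

theorem stmt_17 (r : ℝ) (hr : 0 < r) :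
    Tendsto (fun y : ℝ =>
      (∫ t in Set.Ioi y, Real.exp (-t) / t)
        - ∫ t in Set.Ioc (r * y ^ 2) y, Real.exp (-t) / t)
      (nhdsWithin 0 (Set.Ioi 0))
      (nhds (-Real.eulerMascheroniConstant + Real.log r)) := by
  have hm : 0 < min 1 r⁻¹ := lt_min zero_lt_one (inv_pos.mpr hr)
  have heq : ∀ᶠ y in nhdsWithin (0:ℝ) (Set.Ioi 0),
      (∫ t in Set.Ioi y, Real.exp (-t) / t)
          - (∫ t in Set.Ioc (r * y ^ 2) y, Real.exp (-t) / t)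
        = (∫ t in Ioc y 1, E17h t) - (∫ t in Ioc (r * y ^ 2) y, E17h t)
          + (∫ t in Ioi (1:ℝ), Real.exp (-t) / t) + Real.log r := by
    filter_upwards [Ioo_mem_nhdsGT_of_mem (⟨le_refl 0, hm⟩ : (0:ℝ) ∈ Ico 0 (min 1 r⁻¹))]
      with y hy
    have hy0 : 0 < y := hy.1
    have hy1 : y < 1 := lt_of_lt_of_le hy.2 (min_le_left _ _)
    have hyr : y < r⁻¹ := lt_of_lt_of_le hy.2 (min_le_right _ _)
    have hry2 : 0 < r * y ^ 2 := by positivity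
    have hryy : r * y ^ 2 ≤ y := by
      have h1 : r * y < 1 := by
        rw [← mul_inv_cancel₀ hr.ne']
        exact mul_lt_mul_of_pos_left hyr hr
      nlinarith
    have hsplit : ∫ t in Set.Ioi y, Real.exp (-t) / t
        = (∫ t in Ioc y 1, Real.exp (-t) / t) + ∫ t in Ioi (1:ℝ), Real.exp (-t) / t := by
      rw [show Set.Ioi y = Ioc y 1 ∪ Ioi 1 from (Ioc_union_Ioi_eq_Ioi hy1.le).symm,
        setIntegral_union (Ioc_disjoint_Ioi le_rfl : Disjoint (Ioc y 1) (Ioi 1))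
          measurableSet_Ioi (E17exptInt hy0 le_rfl) E17expdiv_int]
    rw [hsplit, E17decomp hy0 hy1.le le_rfl, E17decomp hry2 hryy hy1.le,
      Real.log_mul hr.ne' (by positivity), Real.log_pow, Real.log_one]
    push_cast
    ring
  have hlim1 := E17tendstoIoc E17h_int
  have hlim2 : Tendsto (fun y : ℝ => ∫ t in Ioc (r * y ^ 2) y, E17h t)
      (nhdsWithin (0:ℝ) (Set.Ioi 0)) (nhds 0) := by
    apply squeeze_zero_norm' _ (tendsto_id.mono_left nhdsWithin_le_nhds)
    filter_upwards [Ioo_mem_nhdsGT_of_mem (⟨le_refl 0, hm⟩ : (0:ℝ) ∈ Ico 0 (min 1 r⁻¹))]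
      with y hy
    have hy0 : 0 < y := hy.1
    have hyr : y < r⁻¹ := lt_of_lt_of_le hy.2 (min_le_right _ _)
    have hry2 : 0 < r * y ^ 2 := by positivity
    have hryy : r * y ^ 2 ≤ y := by
      have h1 : r * y < 1 := by
        rw [← mul_inv_cancel₀ hr.ne']
        exact mul_lt_mul_of_pos_left hyr hr
      nlinarith
    have hb := norm_setIntegral_le_of_norm_le_const (μ := volume) (C := 1)
      (s := Ioc (r * y ^ 2) y) (f := E17h) (by simp)
      (fun x hx => E17h_norm_le (lt_trans hry2 hx.1))
    refine hb.trans ?_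
    rw [one_mul, Real.volume_real_Ioc_of_le hryy]
    simp only [id_eq]
    nlinarith
  have hfinal := ((hlim1.sub hlim2).add_const
    (∫ t in Ioi (1:ℝ), Real.exp (-t) / t)).add_const (Real.log r)
  have hval : -Real.eulerMascheroniConstant + Real.log r
      = ((∫ t in Ioc (0:ℝ) 1, E17h t) - 0 + ∫ t in Ioi (1:ℝ), Real.exp (-t) / t)
        + Real.log r := by
    rw [← E17const]; ring
  rw [hval]
  refine hfinal.congr' ?_
  filter_upwards [heq] with y h
  exact h.symm
end

section
/- For real s with 0 < s < 1, the limit as m → ∞ of (∑_{n=1}^m n^{−s} − ∑_{k=m+1}^{⌊2^{1/(1−s)} m⌋} k^{−s}) exists and equals ζ(s), the value of the analytic continuation of the Riemann zeta function at s. -/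
open Filter Finset

open Complex intervalIntegral


lemma inner_bound {z : ℂ} (hz : 0 < z.re) {n : ℕ} (hn : 1 ≤ n) {x : ℝ}
    (hx1 : (n : ℝ) ≤ x) (hx2 : x ≤ (n : ℝ) + 1) :
    ‖(n : ℂ) ^ (-z) - (x : ℂ) ^ (-z)‖ ≤ ‖z‖ * (n : ℝ) ^ (-z.re - 1) := by
  have hn0 : (0 : ℝ) < n := by exact_mod_cast hn
  have hz0 : z ≠ 0 := fun h => by simp [h] at hz
  have h0 : (0 : ℝ) ∉ Set.uIcc (n : ℝ) x := by
    rw [Set.uIcc_of_le hx1]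
    intro h
    exact absurd h.1 (by linarith)
  have hne : -z - 1 ≠ -1 := by
    intro h
    apply hz0
    have : -z = 0 := by linear_combination h
    simpa [neg_eq_zero] using this
  have hint := integral_cpow (a := (n : ℝ)) (b := x) (r := -z - 1) (Or.inr ⟨hne, h0⟩)
  have he : -z - 1 + 1 = -z := by ring
  rw [he] at hint
  have key : (n : ℂ) ^ (-z) - (x : ℂ) ^ (-z)
      = z * ∫ t : ℝ in (n : ℝ)..x, (t : ℂ) ^ (-z - 1) := by
    rw [hint]
    field_simp [neg_ne_zero.mpr hz0]
    push_cast
    ring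
  rw [key, norm_mul]
  gcongr
  have := intervalIntegral.norm_integral_le_of_norm_le_const
    (C := (n : ℝ) ^ (-z.re - 1)) (a := (n : ℝ)) (b := x)
    (f := fun t : ℝ => (t : ℂ) ^ (-z - 1)) ?_
  · refine this.trans ?_
    rw [_root_.abs_of_nonneg (by linarith : (0:ℝ) ≤ x - n)]
    nlinarith [Real.rpow_nonneg hn0.le (-z.re - 1)]
  · intro t ht
    rw [Set.uIoc_of_le hx1] at ht
    have ht0 : (0 : ℝ) < t := lt_trans hn0 ht.1
    rw [Complex.norm_cpow_eq_rpow_re_of_pos ht0]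
    have : (-z - 1).re = -z.re - 1 := by simp
    rw [this]
    exact Real.rpow_le_rpow_of_nonpos hn0 ht.1.le (by linarith)

noncomputable def zterm (z : ℂ) (n : ℕ) : ℂ :=
  (n : ℂ) ^ (-z) - (((n : ℂ) + 1) ^ (1 - z) - (n : ℂ) ^ (1 - z)) / (1 - z)

lemma zterm_eq_integral {z : ℂ} (hz1 : z ≠ 1) {n : ℕ} (hn : 1 ≤ n) :
    zterm z n = ∫ x : ℝ in (n : ℝ)..((n : ℝ) + 1), ((n : ℂ) ^ (-z) - (x : ℂ) ^ (-z)) := by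
  have hn0 : (0 : ℝ) < n := by exact_mod_cast hn
  have h0 : (0 : ℝ) ∉ Set.uIcc (n : ℝ) ((n : ℝ) + 1) := by
    rw [Set.uIcc_of_le (by linarith)]
    intro h
    exact absurd h.1 (by linarith)
  have hne : -z ≠ -1 := fun h => hz1 (by simpa [neg_inj] using h)
  have hint : (∫ x : ℝ in (n : ℝ)..((n : ℝ) + 1), (x : ℂ) ^ (-z))
      = (((n : ℂ) + 1) ^ (1 - z) - (n : ℂ) ^ (1 - z)) / (1 - z) := by
    have h := integral_cpow (a := (n : ℝ)) (b := (n : ℝ) + 1) (r := -z) (Or.inr ⟨hne, h0⟩)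
    rw [h]
    norm_num [sub_eq_add_neg, add_comm]
  rw [intervalIntegral.integral_sub intervalIntegrable_const
      (intervalIntegrable_cpow (Or.inr h0)), hint, intervalIntegral.integral_const]
  simp [zterm, sub_smul]

lemma norm_zterm_le {z : ℂ} (hz : 0 < z.re) (hz1 : z ≠ 1) {n : ℕ} (hn : 1 ≤ n) :
    ‖zterm z n‖ ≤ ‖z‖ * (n : ℝ) ^ (-z.re - 1) := by
  rw [zterm_eq_integral hz1 hn]
  have := intervalIntegral.norm_integral_le_of_norm_le_const
    (C := ‖z‖ * (n : ℝ) ^ (-z.re - 1)) (a := (n : ℝ)) (b := (n : ℝ) + 1)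
    (f := fun x : ℝ => (n : ℂ) ^ (-z) - (x : ℂ) ^ (-z)) ?_
  · simpa using this
  · intro x hx
    rw [Set.uIoc_of_le (by linarith)] at hx
    exact inner_bound hz hn hx.1.le hx.2

lemma summable_bound {σ : ℝ} (hσ : 0 < σ) (C : ℝ) :
    Summable (fun n : ℕ => C * ((n + 1 : ℕ) : ℝ) ^ (-σ - 1)) := by
  apply Summable.mul_left
  have : Summable (fun n : ℕ => (n : ℝ) ^ (-σ - 1)) :=
    Real.summable_nat_rpow.mpr (by linarith)
  exact_mod_cast (summable_nat_add_iff 1).mpr this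

lemma summable_zterm {z : ℂ} (hz : 0 < z.re) (hz1 : z ≠ 1) :
    Summable (fun n : ℕ => zterm z (n + 1)) := by
  apply Summable.of_norm
  apply Summable.of_nonneg_of_le (fun n => norm_nonneg _)
    (fun n => norm_zterm_le hz hz1 (Nat.le_add_left 1 n))
  exact_mod_cast summable_bound hz ‖z‖

noncomputable def FF (z : ℂ) : ℂ := ∑' n : ℕ, zterm z (n + 1)

lemma differentiableOn_zterm (n : ℕ) :
    DifferentiableOn ℂ (fun z => zterm z (n + 1)) {z : ℂ | z ≠ 1} := by
  intro z hz
  apply DifferentiableAt.differentiableWithinAt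
  have hb : ((n + 1 : ℕ) : ℂ) ≠ 0 := by exact_mod_cast Nat.succ_ne_zero n
  have h1 : DifferentiableAt ℂ (fun z : ℂ => ((n + 1 : ℕ) : ℂ) ^ (-z)) z :=
    (differentiable_neg.differentiableAt (𝕜 := ℂ)).const_cpow (Or.inl hb)
  have hb2 : ((n + 1 : ℕ) : ℂ) + 1 ≠ 0 := by
    intro h
    have : ((n + 2 : ℕ) : ℂ) = 0 := by push_cast; push_cast at h; linear_combination h
    exact_mod_cast this
  have h2 : DifferentiableAt ℂ (fun z : ℂ => (((n + 1 : ℕ) : ℂ) + 1) ^ (1 - z)) z :=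
    ((differentiable_const (1:ℂ)).sub differentiable_id).differentiableAt.const_cpow (Or.inl hb2)
  have h3 : DifferentiableAt ℂ (fun z : ℂ => ((n + 1 : ℕ) : ℂ) ^ (1 - z)) z :=
    ((differentiable_const (1:ℂ)).sub differentiable_id).differentiableAt.const_cpow (Or.inl hb)
  have h4 : (1 : ℂ) - z ≠ 0 := by
    intro h
    exact hz (by linear_combination -h)
  exact h1.sub (((h2.sub h3)).div ((differentiable_const (1:ℂ)).sub differentiable_id).differentiableAt h4)


def UU : Set ℂ := {z : ℂ | 0 < z.re ∧ z ≠ 1}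

lemma isOpen_UU : IsOpen UU := by
  have h1 : IsOpen {z : ℂ | 0 < z.re} := isOpen_lt continuous_const Complex.continuous_re
  have h2 : IsOpen {z : ℂ | z ≠ 1} := isOpen_ne
  exact (h1.inter h2 : IsOpen ({z : ℂ | 0 < z.re} ∩ {z : ℂ | z ≠ 1}))

lemma differentiableAt_FF {z : ℂ} (hz : z ∈ UU) : DifferentiableAt ℂ FF z := by
  obtain ⟨hre, hne⟩ := hz
  set r : ℝ := min (z.re / 2) (‖z - 1‖ / 2) with hr
  have hz1 : (0:ℝ) < ‖z - 1‖ := by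
    simpa [norm_pos_iff, sub_ne_zero] using hne
  have hrpos : 0 < r := lt_min (by linarith) (by linarith)
  have hball : DifferentiableOn ℂ FF (Metric.ball z r) := by
    apply differentiableOn_tsum_of_summable_norm
      (u := fun n : ℕ => (‖z‖ + r) * ((n + 1 : ℕ) : ℝ) ^ (-(z.re / 2) - 1))
      (summable_bound (by linarith) _)
    · intro n
      apply (differentiableOn_zterm n).mono
      intro w hw
      simp only [Metric.mem_ball] at hw
      have : ‖w - z‖ < r := by rwa [dist_eq_norm] at hw
      intro hwe
      rw [hwe] at this
      have h2 : ‖z - 1‖ ≤ ‖(1:ℂ) - z‖ := by rw [norm_sub_rev]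
      have : ‖z - 1‖ < r := lt_of_le_of_lt (by rw [norm_sub_rev]) this
      have := min_le_right (z.re / 2) (‖z - 1‖ / 2)
      linarith
    · exact Metric.isOpen_ball
    · intro n w hw
      simp only [Metric.mem_ball, dist_eq_norm] at hw
      have hwz : ‖w - z‖ < r := hw
      have hwre : z.re / 2 < w.re := by
        have : |(w - z).re| ≤ ‖w - z‖ := Complex.abs_re_le_norm _
        have h2 := min_le_left (z.re / 2) (‖z - 1‖ / 2)
        simp only [Complex.sub_re] at this
        cases' abs_le.mp this with ha hb
        linarith
      have hwne : w ≠ 1 := by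
        intro hwe
        rw [hwe] at hwz
        have : ‖z - 1‖ < r := lt_of_le_of_lt (le_of_eq (norm_sub_rev _ _)) hwz
        have := min_le_right (z.re / 2) (‖z - 1‖ / 2)
        linarith
      refine (norm_zterm_le (by linarith) hwne (Nat.le_add_left 1 n)).trans ?_
      have hnw : ‖w‖ ≤ ‖z‖ + r := by
        have := norm_sub_norm_le w z
        have : ‖w‖ - ‖z‖ ≤ ‖w - z‖ := norm_sub_norm_le w z
        linarith
      have hb1 : (1:ℝ) ≤ ((n + 1 : ℕ) : ℝ) := by exact_mod_cast Nat.le_add_left 1 n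
      have hexp : ((n + 1 : ℕ) : ℝ) ^ (-w.re - 1) ≤ ((n + 1 : ℕ) : ℝ) ^ (-(z.re / 2) - 1) :=
        Real.rpow_le_rpow_of_exponent_le hb1 (by linarith)
      have h0 : (0:ℝ) ≤ ((n + 1 : ℕ) : ℝ) ^ (-w.re - 1) := Real.rpow_nonneg (by positivity) _
      calc ‖w‖ * ((n + 1 : ℕ) : ℝ) ^ (-w.re - 1)
          ≤ (‖z‖ + r) * ((n + 1 : ℕ) : ℝ) ^ (-w.re - 1) := by
            apply mul_le_mul_of_nonneg_right hnw h0
        _ ≤ (‖z‖ + r) * ((n + 1 : ℕ) : ℝ) ^ (-(z.re / 2) - 1) := by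
            apply mul_le_mul_of_nonneg_left hexp (by positivity)
  exact (hball.differentiableAt (Metric.isOpen_ball.mem_nhds (Metric.mem_ball_self hrpos)))

lemma partial_sum_zterm (z : ℂ) (hz1 : z ≠ 1) (N : ℕ) :
    ∑ n ∈ range N, zterm z (n + 1)
      = (∑ n ∈ range N, ((n + 1 : ℕ) : ℂ) ^ (-z))
        - (((N : ℂ) + 1) ^ (1 - z) - 1) / (1 - z) := by
  have key : ∑ n ∈ range N,
      ((((n + 1 : ℕ) : ℂ) + 1) ^ (1 - z) - ((n + 1 : ℕ) : ℂ) ^ (1 - z))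
      = ((N : ℂ) + 1) ^ (1 - z) - 1 := by
    have := Finset.sum_range_sub (fun k : ℕ => (((k : ℂ)) + 1) ^ (1 - z)) N
    simp only [Nat.cast_add, Nat.cast_one] at this ⊢
    rw [this]
    norm_num
  unfold zterm
  rw [Finset.sum_sub_distrib, ← Finset.sum_div, key]

lemma FF_eq_of_one_lt {z : ℂ} (hz : 1 < z.re) : FF z = riemannZeta z - 1 / (z - 1) := by
  have hz0 : 0 < z.re := by linarith
  have hz1 : z ≠ 1 := by
    intro h; rw [h] at hz; simp at hz
  have hsum := (summable_zterm hz0 hz1).hasSum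
  have htend := hsum.tendsto_sum_nat
  -- limit of the explicit form
  have hsum2 : Summable (fun n : ℕ => ((n + 1 : ℕ) : ℂ) ^ (-z)) := by
    apply Summable.of_norm
    have : Summable (fun n : ℕ => ((n + 1 : ℕ) : ℝ) ^ (-z.re)) := by
      have : Summable (fun n : ℕ => (n : ℝ) ^ (-z.re)) :=
        Real.summable_nat_rpow.mpr (by linarith)
      exact_mod_cast (summable_nat_add_iff 1).mpr this
    apply this.congr
    intro n
    rw [show ((n + 1 : ℕ) : ℂ) = (((n + 1 : ℕ) : ℝ) : ℂ) by push_cast; ring,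
      Complex.norm_cpow_eq_rpow_re_of_pos (by positivity)]
    simp
  have hzeta : ∑' n : ℕ, ((n + 1 : ℕ) : ℂ) ^ (-z) = riemannZeta z := by
    rw [zeta_eq_tsum_one_div_nat_add_one_cpow hz]
    congr 1 with n
    rw [cpow_neg, one_div]
    norm_num
  have htend1 : Tendsto (fun N => ∑ n ∈ range N, ((n + 1 : ℕ) : ℂ) ^ (-z)) atTop
      (nhds (riemannZeta z)) := by
    have := hsum2.hasSum.tendsto_sum_nat
    rwa [hzeta] at this
  have htend2 : Tendsto (fun N : ℕ => (((N : ℂ) + 1) ^ (1 - z) - 1) / (1 - z)) atTop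
      (nhds ((0 - 1) / (1 - z))) := by
    apply Tendsto.div_const
    apply Tendsto.sub_const
    rw [show nhds (0 : ℂ) = nhds 0 from rfl]
    rw [tendsto_zero_iff_norm_tendsto_zero]
    have heq : ∀ N : ℕ, ‖((N : ℂ) + 1) ^ (1 - z)‖ = ((N : ℝ) + 1) ^ (1 - z.re) := by
      intro N
      have : ((N : ℂ) + 1) = (((N : ℝ) + 1 : ℝ) : ℂ) := by push_cast; ring
      rw [this, Complex.norm_cpow_eq_rpow_re_of_pos (by positivity)]
      simp
    simp only [heq, show (1 : ℝ) - z.re = -(z.re - 1) by ring]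
    have h1 : Tendsto (fun x : ℝ => x ^ (-(z.re - 1))) atTop (nhds 0) :=
      tendsto_rpow_neg_atTop (by linarith)
    exact h1.comp (tendsto_atTop_add_const_right _ _ tendsto_natCast_atTop_atTop)
  have := htend1.sub htend2
  have heq : (fun N => (∑ n ∈ range N, ((n + 1 : ℕ) : ℂ) ^ (-z))
        - (((N : ℂ) + 1) ^ (1 - z) - 1) / (1 - z))
      = fun N => ∑ n ∈ range N, zterm z (n + 1) := by
    funext N; rw [partial_sum_zterm z hz1]
  rw [heq] at this
  have hval := tendsto_nhds_unique htend this
  rw [show FF z = ∑' (b : ℕ), zterm z (b + 1) from rfl, hval]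
  congr 1
  rw [zero_sub, neg_div, ← div_neg, neg_sub]

lemma isPreconnected_UU : IsPreconnected UU := by
  have c1 : Convex ℝ {z : ℂ | 0 < z.re ∧ z.re < 1} :=
    (convex_halfSpace_re_gt 0).inter (convex_halfSpace_re_lt 1)
  have c2 : Convex ℝ {z : ℂ | 1 < z.re} := convex_halfSpace_re_gt 1
  have c3 : Convex ℝ {z : ℂ | 0 < z.re ∧ 0 < z.im} :=
    (convex_halfSpace_re_gt 0).inter (convex_halfSpace_im_gt 0)
  have c4 : Convex ℝ {z : ℂ | 0 < z.re ∧ z.im < 0} :=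
    (convex_halfSpace_re_gt 0).inter (convex_halfSpace_im_lt 0)
  have h13 : IsPreconnected ({z : ℂ | 0 < z.re ∧ z.re < 1} ∪ {z : ℂ | 0 < z.re ∧ 0 < z.im}) := by
    apply IsPreconnected.union ((1/2 : ℝ) + Complex.I)
    · constructor <;> simp <;> norm_num
    · constructor <;> simp
    · exact c1.isPreconnected
    · exact c3.isPreconnected
  have h132 : IsPreconnected (({z : ℂ | 0 < z.re ∧ z.re < 1} ∪ {z : ℂ | 0 < z.re ∧ 0 < z.im})
      ∪ {z : ℂ | 1 < z.re}) := by
    apply IsPreconnected.union ((2 : ℝ) + Complex.I)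
    · right; constructor <;> simp
    · show (1:ℝ) < ((2 : ℝ) + Complex.I).re; simp
    · exact h13
    · exact c2.isPreconnected
  have h1324 : IsPreconnected ((({z : ℂ | 0 < z.re ∧ z.re < 1} ∪ {z : ℂ | 0 < z.re ∧ 0 < z.im})
      ∪ {z : ℂ | 1 < z.re}) ∪ {z : ℂ | 0 < z.re ∧ z.im < 0}) := by
    apply IsPreconnected.union ((1/2 : ℝ) - Complex.I)
    · left; left; constructor <;> simp <;> norm_num
    · constructor <;> simp
    · exact h132
    · exact c4.isPreconnected
  have hset : UU = (({z : ℂ | 0 < z.re ∧ z.re < 1} ∪ {z : ℂ | 0 < z.re ∧ 0 < z.im})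
      ∪ {z : ℂ | 1 < z.re}) ∪ {z : ℂ | 0 < z.re ∧ z.im < 0} := by
    ext z
    simp only [UU, Set.mem_setOf_eq, Set.mem_union]
    constructor
    · rintro ⟨hre, hne⟩
      rcases lt_trichotomy z.im 0 with him | him | him
      · right; exact ⟨hre, him⟩
      · rcases lt_trichotomy z.re 1 with h1 | h1 | h1
        · left; left; left; exact ⟨hre, h1⟩
        · exfalso; apply hne; exact Complex.ext h1 him
        · left; right; exact h1
      · left; left; right; exact ⟨hre, him⟩
    · rintro ((( ⟨h1, h2⟩ | ⟨h1, h2⟩) | h1) | ⟨h1, h2⟩)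
      · exact ⟨h1, fun he => by rw [he] at h2; norm_num at h2⟩
      · exact ⟨h1, fun he => by rw [he] at h2; norm_num at h2⟩
      · exact ⟨by linarith, fun he => by rw [he] at h1; norm_num at h1⟩
      · exact ⟨h1, fun he => by rw [he] at h2; norm_num at h2⟩
  rw [hset]
  exact h1324

lemma FF_eq {z : ℂ} (hz : z ∈ UU) : FF z = riemannZeta z - 1 / (z - 1) := by
  have hdFF : DifferentiableOn ℂ FF UU :=
    fun z hz => (differentiableAt_FF hz).differentiableWithinAt
  have hFF : AnalyticOnNhd ℂ FF UU := hdFF.analyticOnNhd isOpen_UU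
  have hG : AnalyticOnNhd ℂ (fun z => riemannZeta z - 1 / (z - 1)) UU := by
    apply DifferentiableOn.analyticOnNhd _ isOpen_UU
    intro w hw
    apply DifferentiableAt.differentiableWithinAt
    exact (differentiableAt_riemannZeta hw.2).sub
      ((differentiableAt_const _).div (differentiableAt_id.sub (differentiableAt_const _))
        (sub_ne_zero.mpr hw.2))
  have h2 : (2 : ℂ) ∈ UU := by
    constructor
    · norm_num
    · intro h
      have := congrArg Complex.re h
      norm_num at this
  have hev : FF =ᶠ[nhds (2 : ℂ)] (fun z => riemannZeta z - 1 / (z - 1)) := by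
    have hopen : IsOpen {z : ℂ | 1 < z.re} := isOpen_lt continuous_const Complex.continuous_re
    have hmem : {z : ℂ | 1 < z.re} ∈ nhds (2 : ℂ) := hopen.mem_nhds (by norm_num)
    filter_upwards [hmem] with w hw
    exact FF_eq_of_one_lt hw
  exact hFF.eqOn_of_preconnected_of_eventuallyEq hG isPreconnected_UU h2 hev hz

lemma delta_tendsto {p : ℝ} (hp0 : 0 < p) (hp1 : p < 1) :
    Tendsto (fun k : ℕ => ((k : ℝ) + 1) ^ p - (k : ℝ) ^ p) atTop (nhds 0) := by
  have hbound : ∀ k : ℕ, 1 ≤ k → ((k : ℝ) + 1) ^ p - (k : ℝ) ^ p ≤ p * (k : ℝ) ^ (p - 1) := by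
    intro k hk
    have hk0 : (0 : ℝ) < k := by exact_mod_cast hk
    have hsplit : ((k : ℝ) + 1) = (k : ℝ) * (1 + 1 / k) := by field_simp
    have hb : ((k : ℝ) + 1) ^ p = (k : ℝ) ^ p * (1 + 1 / (k : ℝ)) ^ p := by
      rw [hsplit, Real.mul_rpow hk0.le (by positivity)]
    have hbern : (1 + 1 / (k : ℝ)) ^ p ≤ 1 + p * (1 / k) :=
      rpow_one_add_le_one_add_mul_self (le_trans (by norm_num : (-1:ℝ) ≤ 0) (by positivity)) hp0.le hp1.le
    have h2 : ((k : ℝ) + 1) ^ p ≤ (k : ℝ) ^ p * (1 + p * (1 / k)) := by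
      rw [hb]
      exact mul_le_mul_of_nonneg_left hbern (Real.rpow_nonneg hk0.le _)
    have h3 : (k : ℝ) ^ p * (1 + p * (1 / k)) = (k : ℝ) ^ p + p * ((k : ℝ) ^ p / k) := by
      ring
    have h4 : (k : ℝ) ^ p / (k : ℝ) = (k : ℝ) ^ (p - 1) := by
      rw [Real.rpow_sub hk0, Real.rpow_one]
    rw [h3, h4] at h2
    linarith
  have hpos : ∀ k : ℕ, 0 ≤ ((k : ℝ) + 1) ^ p - (k : ℝ) ^ p := by
    intro k
    have := Real.rpow_le_rpow (Nat.cast_nonneg k) (by linarith : (k : ℝ) ≤ (k : ℝ) + 1) hp0.le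
    linarith
  have hupper : Tendsto (fun k : ℕ => p * (k : ℝ) ^ (p - 1)) atTop (nhds 0) := by
    rw [show (0 : ℝ) = p * 0 by ring]
    apply Tendsto.const_mul
    have h1 : Tendsto (fun x : ℝ => x ^ (-(1 - p))) atTop (nhds 0) :=
      tendsto_rpow_neg_atTop (by linarith)
    have := h1.comp tendsto_natCast_atTop_atTop (α := ℕ)
    simpa [Function.comp_def, show -(1 - p) = p - 1 by ring] using this
  apply tendsto_of_tendsto_of_tendsto_of_le_of_le' tendsto_const_nhds hupper
  · exact Eventually.of_forall hpos
  · filter_upwards [eventually_ge_atTop 1] with k hk using hbound k hk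

lemma zeta_limit {s : ℝ} (hs0 : 0 < s) (hs1 : s < 1) :
    Tendsto (fun m : ℕ => (∑ n ∈ Finset.Icc 1 m, (1 : ℝ) / (n : ℝ) ^ s)
      - (m : ℝ) ^ (1 - s) / (1 - s)) atTop (nhds ((riemannZeta s).re)) := by
  have hsU : (s : ℂ) ∈ UU := by
    constructor
    · simpa using hs0
    · intro h
      rw [show (1 : ℂ) = ((1:ℝ) : ℂ) by norm_num, Complex.ofReal_inj] at h
      linarith
  -- complex partial sums converge to FF s
  have hsum := (summable_zterm hsU.1 hsU.2).hasSum
  have htend := hsum.tendsto_sum_nat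
  -- re of partial sums
  have hre := (Complex.continuous_re.tendsto _).comp htend
  -- identify re of partial sum with the real expression
  have hkey : ∀ N : ℕ, ((∑ n ∈ range N, zterm (s : ℂ) (n + 1)).re)
      = (∑ n ∈ range N, ((n + 1 : ℕ) : ℝ) ^ (-s)) - (((N : ℝ) + 1) ^ (1 - s) - 1) / (1 - s) := by
    intro N
    rw [partial_sum_zterm _ hsU.2]
    have e1 : ∀ n : ℕ, ((n + 1 : ℕ) : ℂ) ^ (-(s : ℂ)) = ((((n + 1 : ℕ) : ℝ) ^ (-s) : ℝ) : ℂ) := by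
      intro n
      rw [Complex.ofReal_cpow (by positivity)]
      push_cast
      ring_nf
    have e2 : (((N : ℂ)) + 1) ^ (1 - (s : ℂ)) = (((((N : ℝ)) + 1) ^ (1 - s) : ℝ) : ℂ) := by
      rw [show ((N : ℂ) + 1) = (((N : ℝ) + 1 : ℝ) : ℂ) by push_cast; ring,
        Complex.ofReal_cpow (by positivity)]
      push_cast
      ring_nf
    simp only [e1, e2]
    rw [← Complex.ofReal_sum]
    have : ((1 : ℂ) - (s : ℂ)) = (((1 - s : ℝ)) : ℂ) := by push_cast; ring
    rw [this, ← Complex.ofReal_one, ← Complex.ofReal_sub, ← Complex.ofReal_div,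
      ← Complex.ofReal_sub, Complex.ofReal_re]
  simp only [Function.comp_def, hkey] at hre
  -- now convert to the Icc / m^(1-s) normalization
  have hdelta := delta_tendsto (p := 1 - s) (by linarith) (by linarith)
  have hD : Tendsto (fun m : ℕ => (((m : ℝ) + 1) ^ (1 - s) - (m : ℝ) ^ (1 - s) - 1) / (1 - s))
      atTop (nhds ((0 - 1) / (1 - s))) := by
    apply Tendsto.div_const
    exact hdelta.sub_const 1
  have hfinal := hre.add hD
  have hzeta : (FF (s : ℂ)).re + (0 - 1) / (1 - s) = (riemannZeta s).re := by
    rw [FF_eq hsU]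
    have : (1 : ℂ) / ((s : ℂ) - 1) = (((1 / (s - 1) : ℝ)) : ℂ) := by
      push_cast
      ring
    rw [Complex.sub_re, this, Complex.ofReal_re]
    have h2 : (0 - 1 : ℝ) / (1 - s) = 1 / (s - 1) := by
      rw [zero_sub, neg_div, ← div_neg, neg_sub]
    rw [h2]
    ring
  rw [show (∑' (i : ℕ), zterm (s:ℂ) (i + 1)) = FF (s:ℂ) from rfl, hzeta] at hfinal
  apply hfinal.congr
  intro m
  have hsumeq : (∑ n ∈ Finset.Icc 1 m, (1 : ℝ) / (n : ℝ) ^ s)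
      = ∑ n ∈ range m, ((n + 1 : ℕ) : ℝ) ^ (-s) := by
    rw [← Finset.Ico_add_one_right_eq_Icc, Finset.sum_Ico_eq_sum_range,
      show m + 1 - 1 = m from rfl]
    apply Finset.sum_congr rfl
    intro n _
    rw [Real.rpow_neg (by positivity), one_div]
    congr 2
    push_cast
    ring
  rw [hsumeq]
  ring

theorem stmt_18 (s : ℝ) (hs0 : 0 < s) (hs1 : s < 1) :
    Tendsto (fun m : ℕ =>
      (∑ n ∈ Finset.Icc 1 m, (1 : ℝ) / (n : ℝ) ^ s)
        - ∑ k ∈ Finset.Icc (m + 1) ⌊(2 : ℝ) ^ (1 / (1 - s)) * m⌋₊,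
            (1 : ℝ) / (k : ℝ) ^ s)
      atTop (nhds ((riemannZeta s).re)) := by
  set c : ℝ := (2 : ℝ) ^ (1 / (1 - s)) with hc
  set N : ℕ → ℕ := fun m => ⌊c * m⌋₊ with hN
  set S : ℕ → ℝ := fun k => ∑ n ∈ Finset.Icc 1 k, (1 : ℝ) / (n : ℝ) ^ s with hS
  set T : ℕ → ℝ := fun k => S k - (k : ℝ) ^ (1 - s) / (1 - s) with hT
  have h1s : (0 : ℝ) < 1 - s := by linarith
  have hc1 : (1 : ℝ) ≤ c := Real.one_le_rpow (by norm_num) (by positivity)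
  have hcm : ∀ m : ℕ, (m : ℝ) ≤ c * m := fun m =>
    le_mul_of_one_le_left (Nat.cast_nonneg m) hc1
  have hmN : ∀ m : ℕ, m ≤ N m := fun m => Nat.le_floor (by exact_mod_cast hcm m)
  have hNtop : Tendsto N atTop atTop := tendsto_atTop_mono hmN tendsto_id
  have hc1s : c ^ (1 - s) = 2 := by
    rw [hc, ← Real.rpow_mul (by norm_num)]
    rw [one_div, inv_mul_cancel₀ (by linarith)]
    norm_num
  have hmul : ∀ m : ℕ, 2 * (m : ℝ) ^ (1 - s) = (c * m) ^ (1 - s) := by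
    intro m
    rw [Real.mul_rpow (by positivity) (Nat.cast_nonneg m), hc1s]
  have hsplit : ∀ m : ℕ, (∑ k ∈ Finset.Icc (m + 1) (N m), (1 : ℝ) / (k : ℝ) ^ s)
      = S (N m) - S m := by
    intro m
    have h := Finset.sum_Ioc_consecutive (fun k : ℕ => (1 : ℝ) / (k : ℝ) ^ s)
      (Nat.zero_le m) (hmN m)
    have e1 : Finset.Icc 1 m = Finset.Ioc 0 m := Finset.Icc_add_one_left_eq_Ioc 0 m
    have e2 : Finset.Icc 1 (N m) = Finset.Ioc 0 (N m) := Finset.Icc_add_one_left_eq_Ioc 0 (N m)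
    have e3 : Finset.Icc (m + 1) (N m) = Finset.Ioc m (N m) := Finset.Icc_add_one_left_eq_Ioc m (N m)
    rw [hS]
    simp only [e1, e2, e3]
    linarith [h]
  have hL := zeta_limit hs0 hs1
  have hLT : Tendsto T atTop (nhds ((riemannZeta s).re)) := hL
  -- remainder
  have hrho : Tendsto (fun m : ℕ => ((c * m) ^ (1 - s) - ((N m : ℝ)) ^ (1 - s)) / (1 - s))
      atTop (nhds 0) := by
    have hup : Tendsto (fun m : ℕ => (((N m : ℝ) + 1) ^ (1 - s) - ((N m : ℝ)) ^ (1 - s)) / (1 - s))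
        atTop (nhds (0 / (1 - s))) :=
      Tendsto.div_const ((delta_tendsto h1s (by linarith)).comp hNtop) _
    rw [zero_div] at hup
    apply tendsto_of_tendsto_of_tendsto_of_le_of_le' tendsto_const_nhds hup
    · apply Eventually.of_forall
      intro m
      apply div_nonneg _ h1s.le
      have h1 : ((N m : ℝ)) ≤ c * m := Nat.floor_le (by positivity)
      have := Real.rpow_le_rpow (Nat.cast_nonneg _) h1 h1s.le
      linarith
    · apply Eventually.of_forall
      intro m
      have h2 : c * m ≤ (N m : ℝ) + 1 := (Nat.lt_floor_add_one _).le
      have h3 := Real.rpow_le_rpow (by positivity) h2 h1s.le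
      gcongr
  have htot := (hLT.const_mul 2).sub (hLT.comp hNtop) |>.add hrho
  rw [show (2 : ℝ) * (riemannZeta s).re - (riemannZeta s).re + 0 = (riemannZeta s).re by ring]
    at htot
  apply htot.congr
  intro m
  simp only [Function.comp_def, hT]
  rw [hsplit m, ← hmul m]
  ring
end
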